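/- Let H be a Hopf algebra, K ⊆ H a Hopf subalgebra, and π : H → K a K-linear (for the left K-module structure of H by multiplication) convolution-invertible map. Then π'(h) := π(h₁) (ε ∘ π⁻¹)(h₂) defines a K-linear convolution-invertible map π' : H → K satisfying ε ∘ π' = ε. -/

import Mathlib

open TensorProduct

noncomputable section ConvTools

variable {R : Type*} [CommSemiring R]
variable {C : Type*} [AddCommMonoid C] [Module R C] [Coalgebra R C]
variable {A : Type*} [Semiring A] [Algebra R A]
variable {B : Type*} [Semiring B] [Algebra R B]

/-- Convolution product of linear maps from a coalgebra to an algebra. -/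
noncomputable def myconv (f g : C →ₗ[R] A) : C →ₗ[R] A :=
  LinearMap.mul' R A ∘ₗ TensorProduct.map f g ∘ₗ Coalgebra.comul

/-- Convolution unit. -/
noncomputable def myconvOne : C →ₗ[R] A :=
  Algebra.linearMap R A ∘ₗ Coalgebra.counit

lemma myconv_apply (f g : C →ₗ[R] A) (c : C) :
    myconv f g c = LinearMap.mul' R A (TensorProduct.map f g (Coalgebra.comul c)) := rfl

lemma myconvOne_apply (c : C) :
    (myconvOne : C →ₗ[R] A) c = Coalgebra.counit (R := R) c • (1 : A) := by
  simp [myconvOne, Algebra.algebraMap_eq_smul_one]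

lemma myconv_one (f : C →ₗ[R] A) : myconv f myconvOne = f := by
  ext c
  have h1 : TensorProduct.map f (Algebra.linearMap R A ∘ₗ Coalgebra.counit)
      = TensorProduct.map f (Algebra.linearMap R A) ∘ₗ
        (Coalgebra.counit (R := R) (A := C)).lTensor C := by
    rw [LinearMap.map_comp_lTensor]
  simp only [myconv, myconvOne, LinearMap.comp_apply, h1]
  rw [Coalgebra.lTensor_counit_comul]
  simp [LinearMap.mul'_apply]

lemma myone_conv (f : C →ₗ[R] A) : myconv myconvOne f = f := by
  ext c
  have h1 : TensorProduct.map (Algebra.linearMap R A ∘ₗ Coalgebra.counit) f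
      = TensorProduct.map (Algebra.linearMap R A) f ∘ₗ
        (Coalgebra.counit (R := R) (A := C)).rTensor C := by
    rw [LinearMap.map_comp_rTensor]
  simp only [myconv, myconvOne, LinearMap.comp_apply, h1]
  rw [Coalgebra.rTensor_counit_comul]
  simp [LinearMap.mul'_apply]

lemma mymul_assoc_aux (s : A ⊗[R] (A ⊗[R] A)) :
    LinearMap.mul' R A ((LinearMap.mul' R A).rTensor A
      ((TensorProduct.assoc R A A A).symm s))
    = LinearMap.mul' R A ((LinearMap.mul' R A).lTensor A s) := by
  induction s with
  | zero => simp
  | tmul a t =>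
    induction t with
    | zero => simp
    | tmul b c => simp [LinearMap.mul'_apply, mul_assoc]
    | add u v hu hv => simp only [tmul_add, map_add, hu, hv]
  | add u v hu hv => simp only [map_add, hu, hv]

lemma myconv_assoc (f g h : C →ₗ[R] A) :
    myconv (myconv f g) h = myconv f (myconv g h) := by
  ext c
  have lhs1 : TensorProduct.map (myconv f g) h
      = ((LinearMap.mul' R A).rTensor A) ∘ₗ
        (TensorProduct.map (TensorProduct.map f g) h) ∘ₗ
        ((Coalgebra.comul (R := R) (A := C)).rTensor C) := by
    rw [LinearMap.map_comp_rTensor, LinearMap.rTensor_comp_map]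
    rfl
  have rhs1 : TensorProduct.map f (myconv g h)
      = ((LinearMap.mul' R A).lTensor A) ∘ₗ
        (TensorProduct.map f (TensorProduct.map g h)) ∘ₗ
        ((Coalgebra.comul (R := R) (A := C)).lTensor C) := by
    rw [LinearMap.map_comp_lTensor, LinearMap.lTensor_comp_map]
    rfl
  simp only [myconv_apply, lhs1, rhs1, LinearMap.comp_apply]
  rw [← Coalgebra.coassoc_symm_apply, TensorProduct.map_map_assoc_symm,
    mymul_assoc_aux]

/-- Composing with an algebra homomorphism commutes with convolution. -/
lemma myalgHom_comp_conv (φ : A →ₐ[R] B) (f g : C →ₗ[R] A) (c : C) :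
    φ (myconv f g c) = myconv (φ.toLinearMap ∘ₗ f) (φ.toLinearMap ∘ₗ g) c := by
  simp only [myconv_apply]
  rw [show TensorProduct.map (φ.toLinearMap ∘ₗ f) (φ.toLinearMap ∘ₗ g)
      = TensorProduct.map φ.toLinearMap φ.toLinearMap ∘ₗ TensorProduct.map f g from
    (TensorProduct.map_comp _ _ _ _)]
  simp only [LinearMap.comp_apply]
  generalize TensorProduct.map f g (Coalgebra.comul c) = t
  induction t with
  | zero => simp
  | tmul a b => simp [LinearMap.mul'_apply]
  | add u v hu hv => simp only [map_add, hu, hv]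

lemma myconv_smul_right (f g : C →ₗ[R] A) (r : R) :
    myconv f (r • g) = r • myconv f g := by
  unfold myconv
  rw [show TensorProduct.map f (r • g) = r • TensorProduct.map f g from ?_]
  · ext c; simp
  · rw [← TensorProduct.mapBilinear_apply, ← TensorProduct.mapBilinear_apply, map_smul]

end ConvTools

section Main

variable {𝕜 H K : Type*} [Field 𝕜] [Ring H] [HopfAlgebra 𝕜 H]
    [Ring K] [HopfAlgebra 𝕜 K]
    (ι : K →ₐc[𝕜] H) (π πinv : H →ₗ[𝕜] K)

/-- The key Sweedler computation: comultiplication of `ι x * h`. -/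
lemma key1 (x : K) (h : H) (rx : Coalgebra.Repr 𝕜 x (K × K)) :
    Coalgebra.comul (R := 𝕜) (ι x * h)
      = ∑ i ∈ rx.index, ((ι (rx.left i)) ⊗ₜ[𝕜] (ι (rx.right i))) *
          Coalgebra.comul (R := 𝕜) h := by
  rw [Bialgebra.comul_mul, ← CoalgHomClass.map_comp_comul_apply ι x, ← rx.eq, map_sum,
    Finset.sum_mul]
  simp

/-- `∑ ε(x₁) • x₂ = x`. -/
lemma hx_left (x : K) (rx : Coalgebra.Repr 𝕜 x (K × K)) :
    ∑ i ∈ rx.index, Coalgebra.counit (R := 𝕜) (rx.left i) • rx.right i = x := by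
  have h2 := congrArg (TensorProduct.lid 𝕜 K) (Coalgebra.sum_counit_tmul_eq rx)
  simp only [map_sum, TensorProduct.lid_tmul, one_smul] at h2
  exact h2

/-- `∑ ε(x₂) • x₁ = x`. -/
lemma hx_right (x : K) (rx : Coalgebra.Repr 𝕜 x (K × K)) :
    ∑ i ∈ rx.index, Coalgebra.counit (R := 𝕜) (rx.right i) • rx.left i = x := by
  have h2 := congrArg (TensorProduct.rid 𝕜 K) (Coalgebra.sum_tmul_counit_eq rx)
  simp only [map_sum, TensorProduct.rid_tmul, one_smul] at h2
  exact h2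

/-- Lemma A: `ε(π⁻¹(ι x * h)) = ε(x) ε(π⁻¹ h)`. -/
lemma auxA (hKlin : ∀ (x : K) (h : H), π (ι x * h) = x * π h)
    (hfg : myconv ((Coalgebra.counit : K →ₗ[𝕜] 𝕜) ∘ₗ π)
        ((Coalgebra.counit : K →ₗ[𝕜] 𝕜) ∘ₗ πinv) = myconvOne)
    (hgf : myconv ((Coalgebra.counit : K →ₗ[𝕜] 𝕜) ∘ₗ πinv)
        ((Coalgebra.counit : K →ₗ[𝕜] 𝕜) ∘ₗ π) = myconvOne)
    (x : K) (h : H) :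
    Coalgebra.counit (R := 𝕜) (πinv (ι x * h)) =
      Coalgebra.counit (R := 𝕜) x * Coalgebra.counit (R := 𝕜) (πinv h) := by
  set εK : K →ₗ[𝕜] 𝕜 := Coalgebra.counit with hεK
  set f : H →ₗ[𝕜] 𝕜 := εK ∘ₗ π with hfdef
  set g : H →ₗ[𝕜] 𝕜 := εK ∘ₗ πinv with hgdef
  -- Step A2 : f ⋆ (g ∘ mulLeft (ι x)) = ε(x) • unit
  have hGx : myconv f (g ∘ₗ LinearMap.mulLeft 𝕜 (ι x))
      = Coalgebra.counit (R := 𝕜) x • (myconvOne : H →ₗ[𝕜] 𝕜) := by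
    apply LinearMap.ext; intro h
    have key2 : ∀ (a b : K) (t : H ⊗[𝕜] H),
        LinearMap.mul' 𝕜 𝕜 (TensorProduct.map f g (((ι a) ⊗ₜ[𝕜] (ι b)) * t))
        = Coalgebra.counit (R := 𝕜) a •
          LinearMap.mul' 𝕜 𝕜 (TensorProduct.map f
            (g ∘ₗ LinearMap.mulLeft 𝕜 (ι b)) t) := by
      intro a b t
      induction t with
      | zero => simp
      | tmul s u =>
        simp only [Algebra.TensorProduct.tmul_mul_tmul, TensorProduct.map_tmul,
          LinearMap.mul'_apply, LinearMap.comp_apply, LinearMap.mulLeft_apply,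
          hfdef, hgdef, hεK]
        rw [hKlin, Bialgebra.counit_mul]
        simp only [smul_eq_mul]; ring
      | add u v hu hv => simp only [mul_add, map_add, hu, hv, smul_add]
    obtain rx := Coalgebra.Repr.arbitrary 𝕜 x
    have key3 : (g ∘ₗ LinearMap.mulLeft 𝕜 (ι x))
        = ∑ i ∈ rx.index, Coalgebra.counit (R := 𝕜) (rx.left i) •
            (g ∘ₗ LinearMap.mulLeft 𝕜 (ι (rx.right i))) := by
      conv_lhs => rw [← hx_left x rx]
      apply LinearMap.ext; intro h'
      simp [map_sum, Finset.sum_mul, smul_mul_assoc]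
    have mapLin : TensorProduct.map f (∑ i ∈ rx.index,
          Coalgebra.counit (R := 𝕜) (rx.left i) •
            (g ∘ₗ LinearMap.mulLeft 𝕜 (ι (rx.right i))))
        = ∑ i ∈ rx.index, Coalgebra.counit (R := 𝕜) (rx.left i) •
            TensorProduct.map f (g ∘ₗ LinearMap.mulLeft 𝕜 (ι (rx.right i))) := by
      rw [← TensorProduct.mapBilinear_apply, map_sum]
      simp [TensorProduct.mapBilinear_apply]
    calc myconv f (g ∘ₗ LinearMap.mulLeft 𝕜 (ι x)) h
        = LinearMap.mul' 𝕜 𝕜 (TensorProduct.map f (g ∘ₗ LinearMap.mulLeft 𝕜 (ι x))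
            (Coalgebra.comul (R := 𝕜) h)) := rfl
      _ = ∑ i ∈ rx.index, Coalgebra.counit (R := 𝕜) (rx.left i) •
            LinearMap.mul' 𝕜 𝕜 (TensorProduct.map f
              (g ∘ₗ LinearMap.mulLeft 𝕜 (ι (rx.right i))) (Coalgebra.comul (R := 𝕜) h)) := by
          rw [key3, mapLin]
          simp [LinearMap.sum_apply, map_sum]
      _ = ∑ i ∈ rx.index, LinearMap.mul' 𝕜 𝕜 (TensorProduct.map f g
            (((ι (rx.left i)) ⊗ₜ[𝕜] (ι (rx.right i))) * Coalgebra.comul (R := 𝕜) h)) := by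
          exact Finset.sum_congr rfl fun i _ => (key2 (rx.left i) (rx.right i) _).symm
      _ = LinearMap.mul' 𝕜 𝕜 (TensorProduct.map f g
            (Coalgebra.comul (R := 𝕜) (ι x * h))) := by
          rw [key1 ι x h rx]; simp [map_sum]
      _ = myconv f g (ι x * h) := rfl
      _ = myconvOne (ι x * h) := by rw [hfg]
      _ = (Coalgebra.counit (R := 𝕜) x • (myconvOne : H →ₗ[𝕜] 𝕜)) h := by
          simp [myconvOne_apply, Bialgebra.counit_mul, CoalgHomClass.counit_comp_apply,
            smul_eq_mul, hεK]
  -- Step A3 : conclude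
  have hGx2 : (g ∘ₗ LinearMap.mulLeft 𝕜 (ι x)) = Coalgebra.counit (R := 𝕜) x • g := by
    calc g ∘ₗ LinearMap.mulLeft 𝕜 (ι x)
        = myconv myconvOne (g ∘ₗ LinearMap.mulLeft 𝕜 (ι x)) := (myone_conv _).symm
      _ = myconv (myconv g f) (g ∘ₗ LinearMap.mulLeft 𝕜 (ι x)) := by rw [hgf]
      _ = myconv g (myconv f (g ∘ₗ LinearMap.mulLeft 𝕜 (ι x))) := myconv_assoc _ _ _
      _ = myconv g (Coalgebra.counit (R := 𝕜) x • myconvOne) := by rw [hGx]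
      _ = Coalgebra.counit (R := 𝕜) x • myconv g myconvOne := myconv_smul_right _ _ _
      _ = Coalgebra.counit (R := 𝕜) x • g := by rw [myconv_one]
  have := LinearMap.congr_fun hGx2 h
  simpa [smul_eq_mul, hgdef, hεK] using this

/-- K-linearity of the normalized map. -/
lemma auxB (hKlin : ∀ (x : K) (h : H), π (ι x * h) = x * π h)
    (hA : ∀ (x : K) (h : H), Coalgebra.counit (R := 𝕜) (πinv (ι x * h)) =
      Coalgebra.counit (R := 𝕜) x * Coalgebra.counit (R := 𝕜) (πinv h))
    (x : K) (h : H) :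
    myconv π (Algebra.linearMap 𝕜 K ∘ₗ (Coalgebra.counit : K →ₗ[𝕜] 𝕜) ∘ₗ πinv) (ι x * h)
      = x * myconv π (Algebra.linearMap 𝕜 K ∘ₗ (Coalgebra.counit : K →ₗ[𝕜] 𝕜) ∘ₗ πinv) h := by
  set gK : H →ₗ[𝕜] K := Algebra.linearMap 𝕜 K ∘ₗ (Coalgebra.counit : K →ₗ[𝕜] 𝕜) ∘ₗ πinv
    with hgKdef
  have key2 : ∀ (a b : K) (t : H ⊗[𝕜] H),
      LinearMap.mul' 𝕜 K (TensorProduct.map π gK (((ι a) ⊗ₜ[𝕜] (ι b)) * t))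
      = Coalgebra.counit (R := 𝕜) b • (a * LinearMap.mul' 𝕜 K (TensorProduct.map π gK t)) := by
    intro a b t
    induction t with
    | zero => simp
    | tmul s u =>
      simp only [Algebra.TensorProduct.tmul_mul_tmul, TensorProduct.map_tmul,
        LinearMap.mul'_apply, hgKdef, LinearMap.comp_apply, Algebra.linearMap_apply]
      rw [hKlin, hA]
      have hz : ∀ (z : K) (c : 𝕜), z * algebraMap 𝕜 K c = c • z := fun z c => by
        rw [Algebra.algebraMap_eq_smul_one, Algebra.mul_smul_comm, mul_one]
      rw [hz, hz, Algebra.mul_smul_comm, smul_smul]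
    | add u v hu hv => simp only [mul_add, map_add, hu, hv, smul_add, mul_add]
  obtain rx := Coalgebra.Repr.arbitrary 𝕜 x
  calc myconv π gK (ι x * h)
      = LinearMap.mul' 𝕜 K (TensorProduct.map π gK (Coalgebra.comul (R := 𝕜) (ι x * h))) := rfl
    _ = ∑ i ∈ rx.index, LinearMap.mul' 𝕜 K (TensorProduct.map π gK
          (((ι (rx.left i)) ⊗ₜ[𝕜] (ι (rx.right i))) * Coalgebra.comul (R := 𝕜) h)) := by
        rw [key1 ι x h rx]; simp [map_sum]
    _ = ∑ i ∈ rx.index, Coalgebra.counit (R := 𝕜) (rx.right i) •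
          (rx.left i * myconv π gK h) := by
        exact Finset.sum_congr rfl fun i _ => key2 (rx.left i) (rx.right i) _
    _ = (∑ i ∈ rx.index, Coalgebra.counit (R := 𝕜) (rx.right i) • rx.left i) *
          myconv π gK h := by
        rw [Finset.sum_mul]
        exact Finset.sum_congr rfl fun i _ => (smul_mul_assoc _ _ _).symm
    _ = x * myconv π gK h := by rw [hx_right x rx]

end Main

/-- Remark 2.9 (1): If π : H → K is a K-linear convolution-invertible map,
then π'(h) := π(h₁)(ε∘π⁻¹)(h₂) is a K-linear convolution-invertible map with ε∘π' = ε. -/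
theorem cointegral_normalize_counit
    {𝕜 H K : Type*} [Field 𝕜] [Ring H] [HopfAlgebra 𝕜 H]
    [Ring K] [HopfAlgebra 𝕜 K]
    (ι : K →ₐc[𝕜] H) (hι : Function.Injective ι)
    (π πinv : H →ₗ[𝕜] K)
    (hKlin : ∀ (x : K) (h : H), π (ι x * h) = x * π h)
    (hconv₁ : ∀ h : H, LinearMap.mul' 𝕜 K (TensorProduct.map π πinv (Coalgebra.comul (R := 𝕜) h))
      = Coalgebra.counit (R := 𝕜) h • (1 : K))
    (hconv₂ : ∀ h : H, LinearMap.mul' 𝕜 K (TensorProduct.map πinv π (Coalgebra.comul (R := 𝕜) h))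
      = Coalgebra.counit (R := 𝕜) h • (1 : K)) :
    ∃ π' : H →ₗ[𝕜] K,
      -- π'(h) = π(h₁) • ε(π⁻¹(h₂))
      (∀ h : H, π' h = (TensorProduct.rid 𝕜 K)
          (TensorProduct.map π ((Coalgebra.counit (R := 𝕜)) ∘ₗ πinv)
            (Coalgebra.comul (R := 𝕜) h)))
      -- π' is K-linear
      ∧ (∀ (x : K) (h : H), π' (ι x * h) = x * π' h)
      -- π' is convolution invertible
      ∧ (∃ π'inv : H →ₗ[𝕜] K,
          (∀ h : H, LinearMap.mul' 𝕜 K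
              (TensorProduct.map π' π'inv (Coalgebra.comul (R := 𝕜) h))
            = Coalgebra.counit (R := 𝕜) h • (1 : K))
          ∧ (∀ h : H, LinearMap.mul' 𝕜 K
              (TensorProduct.map π'inv π' (Coalgebra.comul (R := 𝕜) h))
            = Coalgebra.counit (R := 𝕜) h • (1 : K)))
      -- ε ∘ π' = ε
      ∧ (∀ h : H, Coalgebra.counit (R := 𝕜) (π' h) = Coalgebra.counit (R := 𝕜) h) := by

  have hππ : myconv π πinv = (myconvOne : H →ₗ[𝕜] K) :=
    LinearMap.ext fun h => by rw [myconv_apply, hconv₁ h, myconvOne_apply]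
  have hπiπ : myconv πinv π = (myconvOne : H →ₗ[𝕜] K) :=
    LinearMap.ext fun h => by rw [myconv_apply, hconv₂ h, myconvOne_apply]
  have hcount : (Bialgebra.counitAlgHom 𝕜 K).toLinearMap = (Coalgebra.counit : K →ₗ[𝕜] 𝕜) := rfl
  have hofId : (Algebra.ofId 𝕜 K).toLinearMap = Algebra.linearMap 𝕜 K := rfl
  have hfg : myconv ((Coalgebra.counit : K →ₗ[𝕜] 𝕜) ∘ₗ π)
      ((Coalgebra.counit : K →ₗ[𝕜] 𝕜) ∘ₗ πinv) = (myconvOne : H →ₗ[𝕜] 𝕜) := by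
    apply LinearMap.ext; intro h
    have h1 := myalgHom_comp_conv (Bialgebra.counitAlgHom 𝕜 K) π πinv h
    rw [hππ, hcount] at h1
    rw [← h1, myconvOne_apply, myconvOne_apply]
    simp
  have hgf : myconv ((Coalgebra.counit : K →ₗ[𝕜] 𝕜) ∘ₗ πinv)
      ((Coalgebra.counit : K →ₗ[𝕜] 𝕜) ∘ₗ π) = (myconvOne : H →ₗ[𝕜] 𝕜) := by
    apply LinearMap.ext; intro h
    have h1 := myalgHom_comp_conv (Bialgebra.counitAlgHom 𝕜 K) πinv π h
    rw [hπiπ, hcount] at h1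
    rw [← h1, myconvOne_apply, myconvOne_apply]
    simp
  have hA := auxA ι π πinv hKlin hfg hgf
  set g : H →ₗ[𝕜] 𝕜 := (Coalgebra.counit : K →ₗ[𝕜] 𝕜) ∘ₗ πinv with hgdef
  set f : H →ₗ[𝕜] 𝕜 := (Coalgebra.counit : K →ₗ[𝕜] 𝕜) ∘ₗ π with hfdef
  set gK : H →ₗ[𝕜] K := Algebra.linearMap 𝕜 K ∘ₗ g with hgKdef
  set fK : H →ₗ[𝕜] K := Algebra.linearMap 𝕜 K ∘ₗ f with hfKdef
  have hgKfK : myconv gK fK = (myconvOne : H →ₗ[𝕜] K) := by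
    apply LinearMap.ext; intro h
    have h1 := myalgHom_comp_conv (Algebra.ofId 𝕜 K) g f h
    rw [hgf, hofId] at h1
    rw [hgKdef, hfKdef, ← h1, myconvOne_apply, myconvOne_apply]
    simp [Algebra.ofId_apply, Algebra.algebraMap_eq_smul_one]
  have hfKgK : myconv fK gK = (myconvOne : H →ₗ[𝕜] K) := by
    apply LinearMap.ext; intro h
    have h1 := myalgHom_comp_conv (Algebra.ofId 𝕜 K) f g h
    rw [hfg, hofId] at h1
    rw [hgKdef, hfKdef, ← h1, myconvOne_apply, myconvOne_apply]
    simp [Algebra.ofId_apply, Algebra.algebraMap_eq_smul_one]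
  refine ⟨myconv π gK, ?_, ?_, ⟨myconv fK πinv, ?_, ?_⟩, ?_⟩
  · -- spec: formula
    intro h
    show LinearMap.mul' 𝕜 K (TensorProduct.map π gK (Coalgebra.comul (R := 𝕜) h)) = _
    generalize Coalgebra.comul (R := 𝕜) h = t
    induction t with
    | zero => simp
    | tmul a b =>
      simp [hgKdef, hgdef, LinearMap.mul'_apply, TensorProduct.rid_tmul,
        Algebra.algebraMap_eq_smul_one, Algebra.mul_smul_comm]
    | add u v hu hv => simp only [map_add, hu, hv]
  · -- K-linearity
    intro x h
    have := auxB ι π πinv hKlin hA x h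
    simpa [hgKdef, hgdef] using this
  · -- conv inverse, side 1
    intro h
    have c1 : myconv (myconv π gK) (myconv fK πinv) = (myconvOne : H →ₗ[𝕜] K) := by
      calc myconv (myconv π gK) (myconv fK πinv)
          = myconv π (myconv gK (myconv fK πinv)) := myconv_assoc _ _ _
        _ = myconv π (myconv (myconv gK fK) πinv) := by rw [myconv_assoc]
        _ = myconv π πinv := by rw [hgKfK, myone_conv]
        _ = myconvOne := hππ
    have := LinearMap.congr_fun c1 h
    rw [myconvOne_apply] at this
    exact this
  · -- conv inverse, side 2
    intro h
    have c2 : myconv (myconv fK πinv) (myconv π gK) = (myconvOne : H →ₗ[𝕜] K) := by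
      calc myconv (myconv fK πinv) (myconv π gK)
          = myconv fK (myconv πinv (myconv π gK)) := myconv_assoc _ _ _
        _ = myconv fK (myconv (myconv πinv π) gK) := by rw [myconv_assoc]
        _ = myconv fK gK := by rw [hπiπ, myone_conv]
        _ = myconvOne := hfKgK
    have := LinearMap.congr_fun c2 h
    rw [myconvOne_apply] at this
    exact this
  · -- counit property
    intro h
    have h1 := myalgHom_comp_conv (Bialgebra.counitAlgHom 𝕜 K) π gK h
    have hcg : (Coalgebra.counit : K →ₗ[𝕜] 𝕜) ∘ₗ gK = g := by
      apply LinearMap.ext; intro h'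
      simp [hgKdef, hgdef, Bialgebra.counit_algebraMap]
    rw [hcount, hcg, ← hfdef] at h1
    calc Coalgebra.counit (R := 𝕜) (myconv π gK h)
        = (Bialgebra.counitAlgHom 𝕜 K) (myconv π gK h) := rfl
      _ = myconv f g h := h1
      _ = myconvOne h := by rw [hfg]
      _ = Coalgebra.counit (R := 𝕜) h := by rw [myconvOne_apply]; simp
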